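/- (Failure of GEC without stabilization.) Define, for t ≥ 1, w(t) = sin(t)·exp( (1/8)·∫_1^t (sin²τ)/τ dτ ) and c(t) = 1 − sin(2t)/(4t) + sin²(t)/(8t²) − sin⁴(t)/(64t²). Then w''(t) + c(t)·w(t) = 0 for all t ≥ 1, and moreover there exists a constant κ > 0 such that w'(t)² + w(t)² ≥ κ·t^{1/8} for all t ≥ 1; in particular the energy of this solution is unbounded as t → +∞. -/

import Mathlib

open Real Set MeasureTheory intervalIntegral

noncomputable def Fint (t : ℝ) : ℝ := ∫ τ in (1:ℝ)..t, (Real.sin τ)^2 / τ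

lemma contOn_f : ContinuousOn (fun τ : ℝ => (Real.sin τ)^2 / τ) (Ioi 0) := by
  apply ContinuousOn.div (by fun_prop) continuousOn_id
  intro x hx; exact ne_of_gt hx

lemma hasDerivAt_Fint {t : ℝ} (ht : 0 < t) : HasDerivAt Fint ((Real.sin t)^2 / t) t := by
  apply intervalIntegral.integral_hasDerivAt_right
  · apply ContinuousOn.intervalIntegrable
    apply contOn_f.mono
    intro x hx
    rcases le_total 1 t with h | h
    · rw [uIcc_of_le h] at hx; exact lt_of_lt_of_le one_pos hx.1
    · rw [uIcc_of_ge h] at hx; exact lt_of_lt_of_le ht hx.1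
  · exact contOn_f.stronglyMeasurableAtFilter isOpen_Ioi t ht
  · exact contOn_f.continuousAt (Ioi_mem_nhds ht)

noncomputable def Efun (t : ℝ) : ℝ := Real.exp (1/8 * Fint t)

lemma hasDerivAt_Efun {t : ℝ} (ht : 0 < t) :
    HasDerivAt Efun (Efun t * ((Real.sin t)^2 / (8 * t))) t := by
  have h := ((hasDerivAt_Fint ht).const_mul (1/8 : ℝ)).exp
  refine h.congr_deriv ?_
  unfold Efun
  field_simp

noncomputable def Wfun (t : ℝ) : ℝ := Real.sin t * Efun t

noncomputable def W' (t : ℝ) : ℝ := Efun t * (Real.cos t + (Real.sin t)^3 / (8 * t))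

lemma hasDerivAt_Wfun {t : ℝ} (ht : 0 < t) : HasDerivAt Wfun (W' t) t := by
  have h := (Real.hasDerivAt_sin t).mul (hasDerivAt_Efun ht)
  refine h.congr_deriv ?_
  unfold W' Efun
  field_simp

lemma hasDerivAt_W' {t : ℝ} (ht : 0 < t) :
    HasDerivAt W' (Efun t * ((Real.sin t)^2 / (8*t)) * (Real.cos t + (Real.sin t)^3 / (8 * t))
      + Efun t * (-Real.sin t + (3 * (Real.sin t)^2 * Real.cos t * (8*t) - (Real.sin t)^3 * 8) / (8*t)^2)) t := by
  have hne : (8 : ℝ) * t ≠ 0 := by positivity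
  have h1 : HasDerivAt (fun s => (Real.sin s)^3) (3 * (Real.sin t)^2 * Real.cos t) t := by
    simpa using (Real.hasDerivAt_sin t).fun_pow 3
  have h2 : HasDerivAt (fun s : ℝ => 8 * s) (8 : ℝ) t := by
    simpa using (hasDerivAt_id t).const_mul (8:ℝ)
  have h3 := h1.div h2 hne
  have h4 := (Real.hasDerivAt_cos t).add h3
  exact (hasDerivAt_Efun ht).mul h4

lemma Fint_ge {t : ℝ} (ht : 1 ≤ t) : 1/2 * Real.log t - 3/4 ≤ Fint t := by
  have huIcc : uIcc (1:ℝ) t = Icc 1 t := uIcc_of_le ht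
  have hpos : ∀ x ∈ uIcc (1:ℝ) t, (0:ℝ) < x := by
    intro x hx; rw [huIcc] at hx; linarith [hx.1]
  -- continuity helpers
  have hcont1 : ContinuousOn (fun τ : ℝ => 1 / (2*τ)) (uIcc 1 t) := by
    apply ContinuousOn.div continuousOn_const (by fun_prop)
    intro x hx; have := hpos x hx; positivity
  have hcont2 : ContinuousOn (fun τ : ℝ => (1/(2*τ)) * Real.cos (2*τ)) (uIcc 1 t) :=
    hcont1.mul (by fun_prop)
  have hint1 : IntervalIntegrable (fun τ : ℝ => 1 / (2*τ)) volume 1 t :=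
    hcont1.intervalIntegrable
  have hint2 : IntervalIntegrable (fun τ : ℝ => (1/(2*τ)) * Real.cos (2*τ)) volume 1 t :=
    hcont2.intervalIntegrable
  -- split the integral
  have hsplit : Fint t = (∫ τ in (1:ℝ)..t, 1/(2*τ))
      - ∫ τ in (1:ℝ)..t, (1/(2*τ)) * Real.cos (2*τ) := by
    rw [← intervalIntegral.integral_sub hint1 hint2]
    apply intervalIntegral.integral_congr
    intro x hx
    have hx0 : (0:ℝ) < x := hpos x hx
    have := Real.sin_sq_eq_half_sub x
    field_simp
    rw [this]
    ring
  -- first integral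
  have hL : (∫ τ in (1:ℝ)..t, 1/(2*τ)) = 1/2 * Real.log t := by
    have : ∀ τ : ℝ, 1/(2*τ) = (1/2) * (1/τ) := by intro τ; ring
    simp_rw [this]
    rw [intervalIntegral.integral_const_mul, integral_one_div]
    · simp
    · intro h0; exact absurd (hpos 0 h0) (lt_irrefl 0)
  -- integration by parts for the oscillatory part
  have hu : ∀ x ∈ uIcc (1:ℝ) t, HasDerivAt (fun τ : ℝ => 1/(2*τ)) (-(1/(2*x^2))) x := by
    intro x hx
    have hx0 : (0:ℝ) < x := hpos x hx
    have h2 : HasDerivAt (fun τ : ℝ => 2 * τ) (2:ℝ) x := by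
      simpa using (hasDerivAt_id x).const_mul (2:ℝ)
    have h3 := h2.inv (by positivity)
    have heq : (fun τ : ℝ => 1/(2*τ)) = fun τ : ℝ => (2*τ)⁻¹ := by
      funext τ; rw [one_div]
    rw [heq]
    refine h3.congr_deriv ?_
    field_simp
  have hv : ∀ x ∈ uIcc (1:ℝ) t, HasDerivAt (fun τ : ℝ => Real.sin (2*τ) / 2) (Real.cos (2*x)) x := by
    intro x hx
    have h2 : HasDerivAt (fun τ : ℝ => 2 * τ) (2:ℝ) x := by
      simpa using (hasDerivAt_id x).const_mul (2:ℝ)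
    have := ((Real.hasDerivAt_sin (2*x)).comp x h2).div_const 2
    refine this.congr_deriv ?_
    ring
  have hu'int : IntervalIntegrable (fun x : ℝ => -(1/(2*x^2))) volume 1 t := by
    apply ContinuousOn.intervalIntegrable
    apply ContinuousOn.neg
    apply ContinuousOn.div continuousOn_const (by fun_prop)
    intro x hx; have := hpos x hx; positivity
  have hv'int : IntervalIntegrable (fun x : ℝ => Real.cos (2*x)) volume 1 t := by
    apply ContinuousOn.intervalIntegrable; fun_prop
  have hibp := intervalIntegral.integral_mul_deriv_eq_deriv_mul hu hv hu'int hv'int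
  -- bound the remainder integral
  have hK : (∫ x in (1:ℝ)..t, -(1/(2*x^2)) * (Real.sin (2*x) / 2)) ≥ -(1/4) := by
    have hmono : (∫ x in (1:ℝ)..t, -(1/(4*x^2))) ≤ ∫ x in (1:ℝ)..t, -(1/(2*x^2)) * (Real.sin (2*x) / 2) := by
      apply intervalIntegral.integral_mono_on ht
      · apply ContinuousOn.intervalIntegrable
        apply ContinuousOn.neg
        apply ContinuousOn.div continuousOn_const (by fun_prop)
        intro x hx; rw [huIcc] at *; have : (0:ℝ) < x := by linarith [hx.1]
        positivity
      · apply ContinuousOn.intervalIntegrable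
        apply ContinuousOn.mul
        · apply ContinuousOn.neg
          apply ContinuousOn.div continuousOn_const (by fun_prop)
          intro x hx; have := hpos x hx; positivity
        · fun_prop
      · intro x hx
        have hx0 : (0:ℝ) < x := by linarith [hx.1]
        have hs : Real.sin (2*x) ≤ 1 := Real.sin_le_one _
        have key : -(1/(2*x^2)) * (Real.sin (2*x)/2) - (-(1/(4*x^2)))
            = (1 - Real.sin (2*x))/(4*x^2) := by ring
        have hnn : (0:ℝ) ≤ (1 - Real.sin (2*x))/(4*x^2) :=
          div_nonneg (by linarith) (by positivity)
        linarith
    have hval : (∫ x in (1:ℝ)..t, -(1/(4*x^2))) = -(1/4) * (1 - 1/t) := by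
      have hd : ∀ x ∈ uIcc (1:ℝ) t, HasDerivAt (fun y : ℝ => 1/(4*y)) (-(1/(4*x^2))) x := by
        intro x hx
        have hx0 : (0:ℝ) < x := hpos x hx
        have h2 : HasDerivAt (fun τ : ℝ => 4 * τ) (4:ℝ) x := by
          simpa using (hasDerivAt_id x).const_mul (4:ℝ)
        have h3 := h2.inv (by positivity)
        have heq : (fun y : ℝ => 1/(4*y)) = fun y : ℝ => (4*y)⁻¹ := by
          funext y; rw [one_div]
        rw [heq]
        refine h3.congr_deriv ?_
        field_simp
      have hint : IntervalIntegrable (fun x : ℝ => -(1/(4*x^2))) volume 1 t := by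
        apply ContinuousOn.intervalIntegrable
        apply ContinuousOn.neg
        apply ContinuousOn.div continuousOn_const (by fun_prop)
        intro x hx; have := hpos x hx; positivity
      rw [intervalIntegral.integral_eq_sub_of_hasDerivAt hd hint]
      have ht0 : t ≠ 0 := by linarith
      field_simp
      ring
    have ht0 : (0:ℝ) < t := by linarith
    have h1t : (0:ℝ) < 1/t := by positivity
    rw [hval] at hmono
    nlinarith
  -- bound J
  have hJ : (∫ τ in (1:ℝ)..t, (1/(2*τ)) * Real.cos (2*τ)) ≤ 3/4 := by
    rw [hibp]
    have h1 : 1/(2*t) * (Real.sin (2*t) / 2) ≤ 1/4 := by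
      have hs : Real.sin (2*t) ≤ 1 := Real.sin_le_one _
      have ht0 : (0:ℝ) < t := by linarith
      have h2t : (0:ℝ) < 2*t := by linarith
      have : 1/(2*t) ≤ 1/2 := by
        rw [div_le_div_iff₀ h2t (by norm_num)]; linarith
      nlinarith [Real.neg_one_le_sin (2*t), div_pos one_pos h2t]
    have h2 : -(1/(2*1) * (Real.sin (2*1) / 2)) ≤ 1/4 := by
      have h := Real.neg_one_le_sin (2*(1:ℝ))
      norm_num at h ⊢
      linarith
    linarith [hK]
  rw [hsplit, hL]
  linarith [hJ]

theorem failure_of_GEC_without_stabilization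
    (w c : ℝ → ℝ)
    (hw : ∀ t, w t = Real.sin t *
      Real.exp (1 / 8 * ∫ τ in (1 : ℝ)..t, (Real.sin τ) ^ 2 / τ))
    (hc : ∀ t, c t = 1 - Real.sin (2 * t) / (4 * t) +
      (Real.sin t) ^ 2 / (8 * t ^ 2) - (Real.sin t) ^ 4 / (64 * t ^ 2)) :
    ∃ w' : ℝ → ℝ,
      (∀ t ∈ Ici (1 : ℝ), HasDerivWithinAt w (w' t) (Ici (1 : ℝ)) t) ∧
      (∀ t ∈ Ici (1 : ℝ), HasDerivWithinAt w' (-(c t * w t)) (Ici (1 : ℝ)) t) ∧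
      ∃ κ : ℝ, 0 < κ ∧ ∀ t ≥ (1 : ℝ),
        κ * t ^ ((1 : ℝ) / 8) ≤ (w' t) ^ 2 + (w t) ^ 2 := by
  have hwW : w = Wfun := by
    funext t; rw [hw t]; simp [Wfun, Efun, Fint]
  refine ⟨W', ?_, ?_, ?_⟩
  · intro t ht
    have ht0 : (0:ℝ) < t := lt_of_lt_of_le one_pos ht
    exact (hwW ▸ (hasDerivAt_Wfun ht0)).hasDerivWithinAt
  · intro t ht
    have ht0 : (0:ℝ) < t := lt_of_lt_of_le one_pos ht
    have h := hasDerivAt_W' ht0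
    apply HasDerivAt.hasDerivWithinAt
    refine h.congr_deriv ?_
    rw [hc, hw]
    have hE : Real.exp (1 / 8 * ∫ τ in (1 : ℝ)..t, (Real.sin τ) ^ 2 / τ) = Efun t := by
      simp [Efun, Fint]
    rw [hE, Real.sin_two_mul]
    have htne : t ≠ 0 := ne_of_gt ht0
    field_simp
    ring
  · refine ⟨3/4 * Real.exp (-(3/16)), by positivity, ?_⟩
    intro t ht
    have ht0 : (0:ℝ) < t := lt_of_lt_of_le one_pos ht
    rw [hwW]
    have hfactor : W' t ^ 2 + Wfun t ^ 2
        = Efun t ^ 2 * ((Real.cos t + (Real.sin t)^3/(8*t))^2 + (Real.sin t)^2) := by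
      unfold W' Wfun; ring
    have hE2 : Efun t ^ 2 = Real.exp (Fint t / 4) := by
      rw [Efun, sq, ← Real.exp_add]; ring_nf
    -- bracket bound
    have hs := Real.sin_sq_add_cos_sq t
    have habs : |(Real.sin t)^3/(8*t)| ≤ 1/8 := by
      rw [abs_div]
      have h1 : |(Real.sin t)^3| ≤ 1 := by
        rw [abs_pow]
        exact pow_le_one₀ (abs_nonneg _) (Real.abs_sin_le_one t)
      have h2 : |(8:ℝ)*t| = 8*t := abs_of_pos (by positivity)
      rw [h2]
      rw [div_le_div_iff₀ (by positivity) (by norm_num)]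
      nlinarith
    have hb : (3:ℝ)/4 ≤ (Real.cos t + (Real.sin t)^3/(8*t))^2 + (Real.sin t)^2 := by
      obtain ⟨hδ1, hδ2⟩ := abs_le.mp habs
      nlinarith [Real.neg_one_le_cos t, Real.cos_le_one t,
        sq_nonneg ((Real.sin t)^3/(8*t))]
    -- exponential bound
    have hrpow : t ^ ((1:ℝ)/8) = Real.exp (Real.log t * (1/8)) :=
      Real.rpow_def_of_pos ht0 _
    have hEbound : t ^ ((1:ℝ)/8) * Real.exp (-(3/16)) ≤ Real.exp (Fint t / 4) := by
      rw [hrpow, ← Real.exp_add]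
      apply Real.exp_le_exp.mpr
      have := Fint_ge ht
      linarith
    calc 3/4 * Real.exp (-(3/16)) * t ^ ((1:ℝ)/8)
        = 3/4 * (t ^ ((1:ℝ)/8) * Real.exp (-(3/16))) := by ring
      _ ≤ ((Real.cos t + (Real.sin t)^3/(8*t))^2 + (Real.sin t)^2) * Real.exp (Fint t / 4) := by
          apply mul_le_mul hb hEbound (by positivity) (by linarith)
      _ = Efun t ^ 2 * ((Real.cos t + (Real.sin t)^3/(8*t))^2 + (Real.sin t)^2) := by
          rw [hE2]; ring
      _ = W' t ^ 2 + Wfun t ^ 2 := hfactor.symm
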